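/- Let ρ be a density matrix on ℂ^{d_A} ⊗ ℂ^{d_B} ⊗ ℂ^{d_E}, and let A₀, A₁ (on ℂ^{d_A}), B₀, B₁ (on ℂ^{d_B}), and E₀, E₁ (on ℂ^{d_E}) be Hermitian matrices with square equal to the identity. Define S_AB = Tr[ρ(A₀⊗(B₀+B₁)⊗I + A₁⊗(B₀−B₁)⊗I)] and S_AE = Tr[ρ(A₀⊗I⊗(E₀+E₁) + A₁⊗I⊗(E₀−E₁))]. Then S_AB² + S_AE² ≤ 8. Consequently, if S_AB > 2 then S_AE < 2. -/

import Mathlib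

open Matrix
open scoped Kronecker ComplexOrder

private lemma kron_conjT {l m n p : Type*} [Fintype n] [Fintype m]
    (A : Matrix l m ℂ) (B : Matrix n p ℂ) :
    (A ⊗ₖ B)ᴴ = Aᴴ ⊗ₖ Bᴴ := by
  ext ⟨i,k⟩ ⟨j,t⟩
  simp [conjTranspose_apply, kroneckerMap_apply, mul_comm]

private lemma kron_sub_left {l m n p : Type*} (A B : Matrix l m ℂ) (C : Matrix n p ℂ) :
    (A - B) ⊗ₖ C = A ⊗ₖ C - B ⊗ₖ C := by
  ext ⟨i,k⟩ ⟨j,t⟩; simp [kroneckerMap_apply, sub_mul]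

private lemma kron_sub_right {l m n p : Type*} (A : Matrix l m ℂ) (B C : Matrix n p ℂ) :
    A ⊗ₖ (B - C) = A ⊗ₖ B - A ⊗ₖ C := by
  ext ⟨i,k⟩ ⟨j,t⟩; simp [kroneckerMap_apply, mul_sub]

private lemma kron_neg_left {l m n p : Type*} (A : Matrix l m ℂ) (C : Matrix n p ℂ) :
    (-A) ⊗ₖ C = -(A ⊗ₖ C) := by
  ext ⟨i,k⟩ ⟨j,t⟩; simp [kroneckerMap_apply]

private lemma kron_neg_right {l m n p : Type*} (A : Matrix l m ℂ) (C : Matrix n p ℂ) :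
    A ⊗ₖ (-C) = -(A ⊗ₖ C) := by
  ext ⟨i,k⟩ ⟨j,t⟩; simp [kroneckerMap_apply]

private lemma trace_re_nonneg_of_psd {n : Type*} [Fintype n] [DecidableEq n]
    (M : Matrix n n ℂ) (hM : M.PosSemidef) : 0 ≤ M.trace.re := by
  have h : ∀ i, 0 ≤ (M i i).re := by
    intro i
    have h2 := hM.dotProduct_mulVec_nonneg (Pi.single i 1)
    have h3 : star (Pi.single i 1) ⬝ᵥ (M *ᵥ Pi.single i 1) = M i i := by
      simp [dotProduct, Matrix.mulVec, Pi.single_apply,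
        apply_ite (star : ℂ → ℂ), mul_ite, ite_mul]
    rw [h3] at h2
    exact (Complex.le_def.mp h2).1
  rw [Matrix.trace]
  simpa [Matrix.diag] using Finset.sum_nonneg fun i _ => h i

private lemma tr_quad_nonneg {n : Type*} [Fintype n] [DecidableEq n]
    (ρ : Matrix n n ℂ) (hρ : ρ.PosSemidef) (X : Matrix n n ℂ) :
    0 ≤ ((ρ * (Xᴴ * X)).trace).re := by
  have h : (ρ * (Xᴴ * X)).trace = (X * ρ * Xᴴ).trace := by
    rw [← Matrix.mul_assoc, Matrix.trace_mul_comm (ρ * Xᴴ) X, Matrix.mul_assoc]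
  rw [h]
  exact trace_re_nonneg_of_psd _ (hρ.mul_mul_conjTranspose_same X)

private lemma sos_identity {dA dB dE : ℕ} (A₀ A₁ : Matrix (Fin dA) (Fin dA) ℂ)
    (P Q : Matrix (Fin dB) (Fin dB) ℂ) (R S : Matrix (Fin dE) (Fin dE) ℂ)
    (hA₀2 : A₀ * A₀ = 1) (hA₁2 : A₁ * A₁ = 1)
    (hQQ : Q * Q = (4:ℂ) • 1 - P * P) (hQP : Q * P = -(P * Q))
    (hSS : S * S = (4:ℂ) • 1 - R * R) (hSR : S * R = -(R * S))
    (u v : ℂ) :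
    (v • (A₀ ⊗ₖ (P ⊗ₖ (1 : Matrix (Fin dE) (Fin dE) ℂ)))
      - v • (A₁ ⊗ₖ (Q ⊗ₖ (1 : Matrix (Fin dE) (Fin dE) ℂ)))
      + u • (A₀ ⊗ₖ ((1 : Matrix (Fin dB) (Fin dB) ℂ) ⊗ₖ R))
      - u • (A₁ ⊗ₖ ((1 : Matrix (Fin dB) (Fin dB) ℂ) ⊗ₖ S))
      - (1 : Matrix (Fin dA) (Fin dA) ℂ) ⊗ₖ (P ⊗ₖ R)
      + (1 : Matrix (Fin dA) (Fin dA) ℂ) ⊗ₖ (Q ⊗ₖ S)) *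
    (v • (A₀ ⊗ₖ (P ⊗ₖ (1 : Matrix (Fin dE) (Fin dE) ℂ)))
      - v • (A₁ ⊗ₖ (Q ⊗ₖ (1 : Matrix (Fin dE) (Fin dE) ℂ)))
      + u • (A₀ ⊗ₖ ((1 : Matrix (Fin dB) (Fin dB) ℂ) ⊗ₖ R))
      - u • (A₁ ⊗ₖ ((1 : Matrix (Fin dB) (Fin dB) ℂ) ⊗ₖ S))
      - (1 : Matrix (Fin dA) (Fin dA) ℂ) ⊗ₖ (P ⊗ₖ R)
      + (1 : Matrix (Fin dA) (Fin dA) ℂ) ⊗ₖ (Q ⊗ₖ S))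
    + (v • (A₀ ⊗ₖ (Q ⊗ₖ (1 : Matrix (Fin dE) (Fin dE) ℂ)))
      - v • (A₁ ⊗ₖ (P ⊗ₖ (1 : Matrix (Fin dE) (Fin dE) ℂ)))
      - u • (A₀ ⊗ₖ ((1 : Matrix (Fin dB) (Fin dB) ℂ) ⊗ₖ S))
      + u • (A₁ ⊗ₖ ((1 : Matrix (Fin dB) (Fin dB) ℂ) ⊗ₖ R))
      + (1 : Matrix (Fin dA) (Fin dA) ℂ) ⊗ₖ (P ⊗ₖ S)
      - (1 : Matrix (Fin dA) (Fin dA) ℂ) ⊗ₖ (Q ⊗ₖ R)) *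
    (v • (A₀ ⊗ₖ (Q ⊗ₖ (1 : Matrix (Fin dE) (Fin dE) ℂ)))
      - v • (A₁ ⊗ₖ (P ⊗ₖ (1 : Matrix (Fin dE) (Fin dE) ℂ)))
      - u • (A₀ ⊗ₖ ((1 : Matrix (Fin dB) (Fin dB) ℂ) ⊗ₖ S))
      + u • (A₁ ⊗ₖ ((1 : Matrix (Fin dB) (Fin dB) ℂ) ⊗ₖ R))
      + (1 : Matrix (Fin dA) (Fin dA) ℂ) ⊗ₖ (P ⊗ₖ S)
      - (1 : Matrix (Fin dA) (Fin dA) ℂ) ⊗ₖ (Q ⊗ₖ R))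
    = ((16:ℂ) + 8*u^2 + 8*v^2) • 1
      - (8*u) • (A₀ ⊗ₖ (P ⊗ₖ (1 : Matrix (Fin dE) (Fin dE) ℂ))
                 + A₁ ⊗ₖ (Q ⊗ₖ (1 : Matrix (Fin dE) (Fin dE) ℂ)))
      - (8*v) • (A₀ ⊗ₖ ((1 : Matrix (Fin dB) (Fin dB) ℂ) ⊗ₖ R)
                 + A₁ ⊗ₖ ((1 : Matrix (Fin dB) (Fin dB) ℂ) ⊗ₖ S)) := by
  have hone : (1 : Matrix (Fin dA) (Fin dA) ℂ) ⊗ₖ ((1 : Matrix (Fin dB) (Fin dB) ℂ)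
      ⊗ₖ (1 : Matrix (Fin dE) (Fin dE) ℂ)) = 1 := by
    rw [one_kronecker_one, one_kronecker_one]
  rw [← hone]
  simp only [Matrix.sub_mul, Matrix.mul_sub, Matrix.add_mul, Matrix.mul_add,
    smul_mul_assoc, mul_smul_comm, ← Matrix.mul_kronecker_mul,
    Matrix.one_mul, Matrix.mul_one,
    hA₀2, hA₁2, hQQ, hQP, hSS, hSR,
    kron_sub_left, kron_sub_right, kron_neg_left, kron_neg_right,
    Matrix.add_kronecker, Matrix.kronecker_add,
    Matrix.smul_kronecker, Matrix.kronecker_smul,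
    smul_add, smul_sub, smul_smul, smul_neg,
    mul_neg, neg_mul, neg_neg, sub_eq_add_neg, neg_add]
  module

/-- monogamy trade-off for CHSH values S_AB² + S_AE² ≤ 8. -/
theorem chsh_monogamy (dA dB dE : ℕ)
    (ρ : Matrix (Fin dA × Fin dB × Fin dE) (Fin dA × Fin dB × Fin dE) ℂ)
    (hρ : ρ.PosSemidef) (hρtr : ρ.trace = 1)
    (A₀ A₁ : Matrix (Fin dA) (Fin dA) ℂ)
    (B₀ B₁ : Matrix (Fin dB) (Fin dB) ℂ)
    (E₀ E₁ : Matrix (Fin dE) (Fin dE) ℂ)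
    (hA₀ : A₀.IsHermitian) (hA₁ : A₁.IsHermitian)
    (hA₀2 : A₀ * A₀ = 1) (hA₁2 : A₁ * A₁ = 1)
    (hB₀ : B₀.IsHermitian) (hB₁ : B₁.IsHermitian)
    (hB₀2 : B₀ * B₀ = 1) (hB₁2 : B₁ * B₁ = 1)
    (hE₀ : E₀.IsHermitian) (hE₁ : E₁.IsHermitian)
    (hE₀2 : E₀ * E₀ = 1) (hE₁2 : E₁ * E₁ = 1) :
    let SAB : ℝ := ((ρ * (A₀ ⊗ₖ ((B₀ + B₁) ⊗ₖ (1 : Matrix (Fin dE) (Fin dE) ℂ))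
        + A₁ ⊗ₖ ((B₀ - B₁) ⊗ₖ (1 : Matrix (Fin dE) (Fin dE) ℂ)))).trace).re
    let SAE : ℝ := ((ρ * (A₀ ⊗ₖ ((1 : Matrix (Fin dB) (Fin dB) ℂ) ⊗ₖ (E₀ + E₁))
        + A₁ ⊗ₖ ((1 : Matrix (Fin dB) (Fin dB) ℂ) ⊗ₖ (E₀ - E₁)))).trace).re
    SAB ^ 2 + SAE ^ 2 ≤ 8 ∧ (2 < SAB → SAE < 2) := by
  intro SAB SAE
  have hSAB : SAB = ((ρ * (A₀ ⊗ₖ ((B₀ + B₁) ⊗ₖ (1 : Matrix (Fin dE) (Fin dE) ℂ))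
      + A₁ ⊗ₖ ((B₀ - B₁) ⊗ₖ (1 : Matrix (Fin dE) (Fin dE) ℂ)))).trace).re := rfl
  have hSAE : SAE = ((ρ * (A₀ ⊗ₖ ((1 : Matrix (Fin dB) (Fin dB) ℂ) ⊗ₖ (E₀ + E₁))
      + A₁ ⊗ₖ ((1 : Matrix (Fin dB) (Fin dB) ℂ) ⊗ₖ (E₀ - E₁)))).trace).re := rfl
  -- algebraic relations for P = B₀+B₁, Q = B₀-B₁ and R,S analogues
  have hQQ : (B₀ - B₁) * (B₀ - B₁) = (4:ℂ) • 1 - (B₀ + B₁) * (B₀ + B₁) := by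
    have h : (B₀ - B₁) * (B₀ - B₁) + (B₀ + B₁) * (B₀ + B₁)
        = (B₀ * B₀) + (B₀ * B₀) + ((B₁ * B₁) + (B₁ * B₁)) := by noncomm_ring
    rw [hB₀2, hB₁2] at h
    have h4 : ((1 : Matrix (Fin dB) (Fin dB) ℂ)) + 1 + (1 + 1)
        = (4:ℂ) • 1 := by module
    rw [h4] at h
    exact eq_sub_of_add_eq h
  have hQP : (B₀ - B₁) * (B₀ + B₁) = -((B₀ + B₁) * (B₀ - B₁)) := by
    have h : (B₀ - B₁) * (B₀ + B₁) + (B₀ + B₁) * (B₀ - B₁)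
        = (B₀ * B₀) + (B₀ * B₀) - ((B₁ * B₁) + (B₁ * B₁)) := by noncomm_ring
    rw [hB₀2, hB₁2] at h
    simp only [sub_self] at h
    exact eq_neg_of_add_eq_zero_left h
  have hSS : (E₀ - E₁) * (E₀ - E₁) = (4:ℂ) • 1 - (E₀ + E₁) * (E₀ + E₁) := by
    have h : (E₀ - E₁) * (E₀ - E₁) + (E₀ + E₁) * (E₀ + E₁)
        = (E₀ * E₀) + (E₀ * E₀) + ((E₁ * E₁) + (E₁ * E₁)) := by noncomm_ring
    rw [hE₀2, hE₁2] at h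
    have h4 : ((1 : Matrix (Fin dE) (Fin dE) ℂ)) + 1 + (1 + 1)
        = (4:ℂ) • 1 := by module
    rw [h4] at h
    exact eq_sub_of_add_eq h
  have hSR : (E₀ - E₁) * (E₀ + E₁) = -((E₀ + E₁) * (E₀ - E₁)) := by
    have h : (E₀ - E₁) * (E₀ + E₁) + (E₀ + E₁) * (E₀ - E₁)
        = (E₀ * E₀) + (E₀ * E₀) - ((E₁ * E₁) + (E₁ * E₁)) := by noncomm_ring
    rw [hE₀2, hE₁2] at h
    simp only [sub_self] at h
    exact eq_neg_of_add_eq_zero_left h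
  -- the key linear bound, for all real uu vv
  have key : ∀ uu vv : ℝ, 8*uu*SAB + 8*vv*SAE ≤ 16 + 8*uu^2 + 8*vv^2 := by
    intro uu vv
    set Y1 : Matrix (Fin dA × Fin dB × Fin dE) (Fin dA × Fin dB × Fin dE) ℂ :=
      (vv:ℂ) • (A₀ ⊗ₖ ((B₀ + B₁) ⊗ₖ (1 : Matrix (Fin dE) (Fin dE) ℂ)))
      - (vv:ℂ) • (A₁ ⊗ₖ ((B₀ - B₁) ⊗ₖ (1 : Matrix (Fin dE) (Fin dE) ℂ)))
      + (uu:ℂ) • (A₀ ⊗ₖ ((1 : Matrix (Fin dB) (Fin dB) ℂ) ⊗ₖ (E₀ + E₁)))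
      - (uu:ℂ) • (A₁ ⊗ₖ ((1 : Matrix (Fin dB) (Fin dB) ℂ) ⊗ₖ (E₀ - E₁)))
      - (1 : Matrix (Fin dA) (Fin dA) ℂ) ⊗ₖ ((B₀ + B₁) ⊗ₖ (E₀ + E₁))
      + (1 : Matrix (Fin dA) (Fin dA) ℂ) ⊗ₖ ((B₀ - B₁) ⊗ₖ (E₀ - E₁)) with hY1
    set Y2 : Matrix (Fin dA × Fin dB × Fin dE) (Fin dA × Fin dB × Fin dE) ℂ :=
      (vv:ℂ) • (A₀ ⊗ₖ ((B₀ - B₁) ⊗ₖ (1 : Matrix (Fin dE) (Fin dE) ℂ)))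
      - (vv:ℂ) • (A₁ ⊗ₖ ((B₀ + B₁) ⊗ₖ (1 : Matrix (Fin dE) (Fin dE) ℂ)))
      - (uu:ℂ) • (A₀ ⊗ₖ ((1 : Matrix (Fin dB) (Fin dB) ℂ) ⊗ₖ (E₀ - E₁)))
      + (uu:ℂ) • (A₁ ⊗ₖ ((1 : Matrix (Fin dB) (Fin dB) ℂ) ⊗ₖ (E₀ + E₁)))
      + (1 : Matrix (Fin dA) (Fin dA) ℂ) ⊗ₖ ((B₀ + B₁) ⊗ₖ (E₀ - E₁))
      - (1 : Matrix (Fin dA) (Fin dA) ℂ) ⊗ₖ ((B₀ - B₁) ⊗ₖ (E₀ + E₁)) with hY2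
    have hid := sos_identity A₀ A₁ (B₀ + B₁) (B₀ - B₁) (E₀ + E₁) (E₀ - E₁)
      hA₀2 hA₁2 hQQ hQP hSS hSR (uu:ℂ) (vv:ℂ)
    rw [← hY1, ← hY2] at hid
    have hH1 : Y1ᴴ = Y1 := by
      rw [hY1]
      simp only [Matrix.conjTranspose_add, Matrix.conjTranspose_sub,
        Matrix.conjTranspose_smul, kron_conjT, Matrix.conjTranspose_one,
        hA₀.eq, hA₁.eq, hB₀.eq, hB₁.eq, hE₀.eq, hE₁.eq,
        Complex.star_def, Complex.conj_ofReal]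
    have hH2 : Y2ᴴ = Y2 := by
      rw [hY2]
      simp only [Matrix.conjTranspose_add, Matrix.conjTranspose_sub,
        Matrix.conjTranspose_smul, kron_conjT, Matrix.conjTranspose_one,
        hA₀.eq, hA₁.eq, hB₀.eq, hB₁.eq, hE₀.eq, hE₁.eq,
        Complex.star_def, Complex.conj_ofReal]
    have p1 : 0 ≤ ((ρ * (Y1 * Y1)).trace).re := by
      have h := tr_quad_nonneg ρ hρ Y1
      rwa [hH1] at h
    have p2 : 0 ≤ ((ρ * (Y2 * Y2)).trace).re := by
      have h := tr_quad_nonneg ρ hρ Y2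
      rwa [hH2] at h
    have trcomb : (ρ * (Y1 * Y1)).trace + (ρ * (Y2 * Y2)).trace
        = (((16 + 8*uu^2 + 8*vv^2 : ℝ) : ℂ))
          - (((8*uu : ℝ)) : ℂ) * (ρ * (A₀ ⊗ₖ ((B₀ + B₁) ⊗ₖ (1 : Matrix (Fin dE) (Fin dE) ℂ))
              + A₁ ⊗ₖ ((B₀ - B₁) ⊗ₖ (1 : Matrix (Fin dE) (Fin dE) ℂ)))).trace
          - (((8*vv : ℝ)) : ℂ) * (ρ * (A₀ ⊗ₖ ((1 : Matrix (Fin dB) (Fin dB) ℂ) ⊗ₖ (E₀ + E₁))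
              + A₁ ⊗ₖ ((1 : Matrix (Fin dB) (Fin dB) ℂ) ⊗ₖ (E₀ - E₁)))).trace := by
      rw [← Matrix.trace_add, ← Matrix.mul_add, hid, Matrix.mul_sub, Matrix.mul_sub,
        mul_smul_comm, mul_smul_comm, mul_smul_comm, Matrix.mul_one,
        Matrix.trace_sub, Matrix.trace_sub, Matrix.trace_smul, Matrix.trace_smul,
        Matrix.trace_smul, hρtr]
      simp only [smul_eq_mul]
      push_cast
      ring
    have sum0 : (0:ℝ) ≤ ((ρ * (Y1 * Y1)).trace + (ρ * (Y2 * Y2)).trace).re := by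
      rw [Complex.add_re]
      exact add_nonneg p1 p2
    rw [trcomb] at sum0
    simp only [Complex.sub_re, Complex.ofReal_re, Complex.re_ofReal_mul] at sum0
    rw [← hSAB, ← hSAE] at sum0
    nlinarith [sum0]
  have main : SAB ^ 2 + SAE ^ 2 ≤ 8 := by
    have h := key (SAB/2) (SAE/2)
    nlinarith [h]
  refine ⟨main, ?_⟩
  intro h2
  by_contra hc
  push_neg at hc
  nlinarith [main, h2, hc]
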